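/- Let G be a graph with incidence matrix A, let w minimize |𝟙 − Aw|₂, and set α = Aw. If a connected component of G contains an odd cycle (i.e., is not bipartite), then α_v = 1 for every vertex v in that component. -/

import Mathlib

open Finset Matrix

/-- With `A` the incidence matrix of a graph `G`, `w` minimizing
`|𝟙 - A w|₂` and `α = A w`: if the connected component of a vertex `v` contains an odd
closed walk (i.e. is not bipartite), then `α_v = 1` for every vertex of that component. -/
theorem stmt4 {V E : Type*} [Fintype V] [Fintype E] [DecidableEq V]
    (ends : E → V × V) (hne : ∀ e, (ends e).1 ≠ (ends e).2)
    (A : Matrix V E ℝ)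
    (hA : ∀ i e, A i e = if i = (ends e).1 ∨ i = (ends e).2 then 1 else 0)
    (G : SimpleGraph V)
    (hG : ∀ u v, G.Adj u v ↔ u ≠ v ∧ ∃ e, ends e = (u, v) ∨ ends e = (v, u))
    (w : E → ℝ)
    (hmin : ∀ w' : E → ℝ,
      ∑ i, (1 - A.mulVec w i) ^ 2 ≤ ∑ i, (1 - A.mulVec w' i) ^ 2) :
    ∀ (v u : V) (walk : G.Walk u u), Odd walk.length → G.Reachable v u →
      A.mulVec w v = 1 := by
  classical
  set α : V → ℝ := A.mulVec w with hα
  -- key: for each edge, (1 - α u) + (1 - α v) = 0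
  have key : ∀ e : E, (1 - α (ends e).1) + (1 - α (ends e).2) = 0 := by
    intro e
    set u := (ends e).1
    set v := (ends e).2
    set s : ℝ := (1 - α u) + (1 - α v) with hs
    have hsum : ∀ g : V → ℝ, ∑ i, A i e * g i = g u + g v := by
      intro g
      have : ∀ i, A i e * g i = if i ∈ ({u, v} : Finset V) then g i else 0 := by
        intro i
        rw [hA]; change (if i = u ∨ i = v then (1:ℝ) else 0) * g i = _
        by_cases h : i = u ∨ i = v <;>
          simp [h, Finset.mem_insert, Finset.mem_singleton]
      rw [Finset.sum_congr rfl fun i _ => this i, Finset.sum_ite_mem,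
        Finset.univ_inter, Finset.sum_pair (hne e)]
    set δ : E → ℝ := Pi.single e 1 with hδ
    have hmv : ∀ i, A.mulVec (w + (s/2) • δ) i = α i + (s/2) * A i e := by
      intro i
      rw [Matrix.mulVec_add, Matrix.mulVec_smul]
      simp only [Pi.add_apply, Pi.smul_apply, smul_eq_mul, hα]
      congr 1
      simp [Matrix.mulVec, dotProduct, hδ, Pi.single_apply, mul_comm]
    have h1 := hmin (w + (s/2) • δ)
    have expand : ∑ i, (1 - A.mulVec (w + (s/2) • δ) i) ^ 2
        = ∑ i, (1 - α i) ^ 2 - s * (∑ i, A i e * (1 - α i))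
          + (s/2)^2 * ∑ i, A i e * A i e := by
      simp only [hmv]
      rw [Finset.mul_sum, Finset.mul_sum, ← Finset.sum_sub_distrib,
        ← Finset.sum_add_distrib]
      exact Finset.sum_congr rfl fun i _ => by ring
    rw [expand, hsum (fun i => 1 - α i)] at h1
    have hAu : A u e = 1 := by rw [hA]; simp [u]
    have hAv : A v e = 1 := by rw [hA]; simp [v]
    have h2 : ∑ i, A i e * A i e = 2 := by
      rw [hsum (fun i => A i e), hAu, hAv]; norm_num
    rw [h2, ← hs] at h1
    nlinarith [sq_nonneg s]
  -- walk induction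
  have step : ∀ a b : V, G.Adj a b → 1 - α a = -(1 - α b) := by
    intro a b hab
    obtain ⟨hab', e, he | he⟩ := (hG a b).mp hab
    · have := key e; rw [he] at this; linarith
    · have := key e; rw [he] at this; linarith
  have walk : ∀ (a b : V) (p : G.Walk a b), 1 - α a = (-1 : ℝ) ^ p.length * (1 - α b) := by
    intro a b p
    induction p with
    | nil => simp
    | cons h p ih =>
      rw [SimpleGraph.Walk.length_cons, step _ _ h, ih]
      ring
  intro v u p hodd hreach
  have hu : α u = 1 := by
    have := walk u u p
    rw [Odd.neg_one_pow hodd] at this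
    linarith
  obtain ⟨q⟩ := hreach
  have := walk v u q
  rw [hu] at this
  simp at this
  linarith [this]
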